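/- In the ring R = ℤ[q, t₁,...,t_n][x₁,...,x_k]^{S_k} / J with J = ⟨h_{n−k+1}(x|t), ..., h_{n−1}(x|t), h_n(x|t)+(−1)^k q⟩ and torus indices reduced mod n, one has h_{nd+j}(x|t) ≡ (−1)^{d(k−1)} q^d h_j(x|t) mod J for all d ≥ 1 and 0 ≤ j ≤ n−1. -/

import Mathlib

set_option maxHeartbeats 1600000
set_option synthInstance.maxHeartbeats 400000


noncomputable section

/-- Coefficient ring `ℤ[q, t₁, …, tₙ]`: `none ↦ q`, `some i ↦ t_{i+1}`. -/
abbrev CoeffRing (n : ℕ) := MvPolynomial (Option (Fin n)) ℤ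

/-- The full polynomial ring in `x₁, …, x_k` over `ℤ[q, t₁, …, tₙ]`. -/
abbrev PolyRing (n k : ℕ) := MvPolynomial (Fin k) (CoeffRing n)

/-- The quantum parameter `q`. -/
def qvar (n : ℕ) : CoeffRing n := MvPolynomial.X none

/-- The torus weight `t_j`, with index reduced mod `n`
(representatives `{1, …, n}`). -/
def tvar (n : ℕ) (hn : 0 < n) (j : ℤ) : CoeffRing n :=
  MvPolynomial.X (some ⟨((j - 1) % (n : ℤ)).toNat, by
    have h0 : (0 : ℤ) < (n : ℤ) := by exact_mod_cast hn
    have h1 := Int.emod_nonneg (j - 1) h0.ne'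
    have h2 := Int.emod_lt_of_pos (j - 1) h0
    omega⟩)

/-- The factorial complete homogeneous polynomial `h_m(x | τ^{-s} t)`:
the factorial Schur polynomial of the one-row partition `(m)`, with torus
weights shifted by `τ^{-s}` (i.e. `t_i` replaced by `t_{i-s}`). -/
def hfac (n k : ℕ) (hn : 0 < n) (m : ℕ) (s : ℤ) : PolyRing n k :=
  ∑ f ∈ Finset.univ.filter (fun f : Fin m → Fin k => ∀ a b : Fin m, a ≤ b → f a ≤ f b),
    ∏ j : Fin m,
      (MvPolynomial.X (f j) -
        MvPolynomial.C (tvar n hn (((f j : ℕ) : ℤ) + 1 + ((j : ℕ) : ℤ) - s)))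

/-- `hfac` extended to integer degrees (zero in negative degrees). -/
def hzfac (n k : ℕ) (hn : 0 < n) (m s : ℤ) : PolyRing n k :=
  if 0 ≤ m then hfac n k hn m.toNat s else 0

/-- The quantum ideal
`J = ⟨h_{n-k+1}(x|t), …, h_{n-1}(x|t), h_n(x|t) + (-1)^k q⟩`. -/
def Jideal (n k : ℕ) (hn : 0 < n) : Ideal (PolyRing n k) :=
  Ideal.span
    (((fun m => hfac n k hn m 0) '' {m : ℕ | n - k + 1 ≤ m ∧ m ≤ n - 1}) ∪
      {hfac n k hn n 0 + (-1 : PolyRing n k) ^ k * MvPolynomial.C (qvar n)})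

/-- The factorial Schur polynomial, via the factorial Jacobi–Trudi formula
`s_λ(x|t) = det (h_{λ_i + j - i}(x | τ^{1-j} t))_{1 ≤ i,j ≤ k}`. -/
def sfac (n k : ℕ) (hn : 0 < n) (lam : Fin k → ℕ) : PolyRing n k :=
  Matrix.det (Matrix.of fun i j : Fin k =>
    hzfac n k hn ((lam i : ℤ) + ((j : ℕ) : ℤ) - ((i : ℕ) : ℤ)) ((j : ℕ) : ℤ))


namespace QH
open Finset MvPolynomial

variable (n k : ℕ) (hn : 0 < n)

/-- weight of one entry of the h-part: value `a` at 0-indexed position `p`. -/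
def hft (a : Fin k) (p : ℕ) : PolyRing n k :=
  MvPolynomial.X a - MvPolynomial.C (tvar n hn ((a : ℤ) + 1 + (p : ℕ)))

/-- weight of a weakly decreasing list (reversed word), head sits at the last position. -/
def hw : List (Fin k) → PolyRing n k
  | [] => 1
  | a :: t => hft n k hn a t.length * hw t

lemma hw_nil : hw n k hn [] = 1 := rfl
lemma hw_cons (a : Fin k) (t : List (Fin k)) :
    hw n k hn (a :: t) = hft n k hn a t.length * hw n k hn t := rfl

/-- sorted (weakly decreasing) lists of length `m`. -/
def SL (m : ℕ) : Finset (List (Fin k)) :=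
  ((Finset.univ : Finset (Fin m → Fin k)).image List.ofFn).filter
    (fun l => l.Pairwise (· ≥ ·))

lemma mem_SL {m : ℕ} {l : List (Fin k)} :
    l ∈ SL k m ↔ l.Pairwise (· ≥ ·) ∧ l.length = m := by
  constructor
  · intro h
    rw [SL, Finset.mem_filter, Finset.mem_image] at h
    obtain ⟨⟨f, _, rfl⟩, hs⟩ := h
    exact ⟨hs, List.length_ofFn (f := f)⟩
  · rintro ⟨hs, rfl⟩
    rw [SL, Finset.mem_filter, Finset.mem_image]
    exact ⟨⟨l.get, Finset.mem_univ _, List.ofFn_get l⟩, hs⟩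

lemma hw_ofFn (m : ℕ) (g : Fin m → Fin k) :
    hw n k hn (List.ofFn g) = ∏ j : Fin m, hft n k hn (g j) (m - 1 - (j : ℕ)) := by
  induction m with
  | zero => simp [hw]
  | succ m ih =>
    rw [List.ofFn_succ, hw_cons, ih, Fin.prod_univ_succ]
    congr 1
    · simp [List.length_ofFn]
    · apply Finset.prod_congr rfl
      intro j _
      congr 1
      simp [Fin.val_succ]
      omega

lemma hfac_eq_SL (m : ℕ) :
    hfac n k hn m 0 = ∑ l ∈ SL k m, hw n k hn l := by
  have h1 : SL k m =
      (Finset.univ.filter fun g : Fin m → Fin k => (List.ofFn g).Pairwise (· ≥ ·)).image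
        List.ofFn := by
    rw [SL, Finset.filter_image]
  rw [h1, Finset.sum_image (fun a _ b _ h => List.ofFn_injective h)]
  rw [hfac]
  refine Finset.sum_nbij' (fun f => f ∘ Fin.rev) (fun g => g ∘ Fin.rev) ?_ ?_ ?_ ?_ ?_
  · intro f hf
    simp only [Finset.mem_filter, Finset.mem_univ, true_and] at hf ⊢
    rw [List.pairwise_ofFn]
    intro a b hab
    exact hf _ _ (Fin.rev_le_rev.mpr hab.le)
  · intro g hg
    simp only [Finset.mem_filter, Finset.mem_univ, true_and] at hg ⊢
    rw [List.pairwise_ofFn] at hg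
    intro a b hab
    rcases eq_or_lt_of_le hab with rfl | h
    · exact le_refl _
    · exact hg (Fin.rev_lt_rev.mpr h)
  · intro f _; funext i; simp [Function.comp, Fin.rev_rev]
  · intro g _; funext i; simp [Function.comp, Fin.rev_rev]
  · intro f hf
    rw [hw_ofFn, ← Equiv.prod_comp Fin.revPerm
      (fun j : Fin m => MvPolynomial.X (f j) -
        MvPolynomial.C (tvar n hn (((f j : ℕ) : ℤ) + 1 + ((j : ℕ) : ℤ) - 0)))]
    apply Finset.prod_congr rfl
    intro j _
    simp only [Fin.revPerm_apply, Function.comp, hft]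
    congr 2
    have hj := j.isLt
    have hv : (Fin.rev j : ℕ) = m - 1 - (j : ℕ) := by
      rw [Fin.val_rev]; omega
    rw [hv, sub_zero]

/-- weight of the e-part: factorial elementary with shift `s`. -/
def ew (s : ℤ) (Cs : Finset (Fin k)) : PolyRing n k :=
  ∏ c ∈ Cs, (MvPolynomial.X c -
    MvPolynomial.C (tvar n hn ((c : ℤ) + 1 - ((Cs.filter (fun b => b ≤ c)).card : ℤ) + s)))

def efax (s : ℤ) (r : ℕ) : PolyRing n k :=
  ∑ Cs ∈ Finset.powersetCard r (Finset.univ : Finset (Fin k)), ew n k hn s Cs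

lemma tvar_add_n (j : ℤ) : tvar n hn (j + n) = tvar n hn j := by
  rw [tvar, tvar]
  congr 2
  have h0 : (0 : ℤ) < (n : ℤ) := by exact_mod_cast hn
  have h1 := Int.emod_nonneg (j - 1) h0.ne'
  have h2 := Int.emod_lt_of_pos (j - 1) h0
  have h3 : (j + n - 1) % n = (j - 1) % n := by
    rw [show j + (n : ℤ) - 1 = (j - 1) + (n : ℤ) * 1 by ring, Int.add_mul_emod_self_left]
  ext
  simp [h3]

lemma ew_shift (s : ℤ) (Cs : Finset (Fin k)) : ew n k hn (s + n) Cs = ew n k hn s Cs := by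
  rw [ew, ew]
  apply Finset.prod_congr rfl
  intro c _
  congr 1
  rw [show (c : ℤ) + 1 - ((Cs.filter (fun b => b ≤ c)).card : ℤ) + (s + n)
      = ((c : ℤ) + 1 - ((Cs.filter (fun b => b ≤ c)).card : ℤ) + s) + n by ring,
    tvar_add_n]

lemma efax_shift (s : ℤ) (r : ℕ) : efax n k hn (s + n) r = efax n k hn s r :=
  Finset.sum_congr rfl fun Cs _ => ew_shift n k hn s Cs

lemma efax_zero (s : ℤ) : efax n k hn s 0 = 1 := by
  rw [efax]
  simp [ew]

/-- inserting a new maximum into the e-part. -/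
lemma ew_insert (s : ℤ) (Cs : Finset (Fin k)) (a : Fin k) (ha : ∀ c ∈ Cs, c < a) :
    ew n k hn s (insert a Cs) =
      (MvPolynomial.X a -
        MvPolynomial.C (tvar n hn ((a : ℤ) + 1 - ((Cs.card : ℤ) + 1) + s))) * ew n k hn s Cs := by
  have hnotmem : a ∉ Cs := fun h => lt_irrefl a (ha a h)
  rw [ew, Finset.prod_insert hnotmem]
  congr 1
  · congr 2
    have : (insert a Cs).filter (fun b => b ≤ a) = insert a Cs := by
      apply Finset.filter_true_of_mem
      intro c hc
      rcases Finset.mem_insert.mp hc with rfl | hc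
      · exact le_refl _
      · exact (ha c hc).le
    rw [this, Finset.card_insert_of_notMem hnotmem]
    push_cast
    ring
  · rw [ew]
    apply Finset.prod_congr rfl
    intro c hc
    have : (insert a Cs).filter (fun b => b ≤ a)  = (insert a Cs).filter (fun b => b ≤ a) := rfl
    congr 3
    rw [Finset.filter_insert]
    rw [if_neg (by exact fun h => absurd h (not_le.mpr (ha c hc)))]

/-- the carrier: pairs (C, l) with `l` weakly decreasing and `|C| + |l| = s`. -/
def TT (s : ℕ) : Finset (Finset (Fin k) × List (Fin k)) :=
  (Finset.range (k+1)).biUnion (fun r =>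
    if r ≤ s then (Finset.powersetCard r (Finset.univ : Finset (Fin k))) ×ˢ SL k (s - r)
    else ∅)

lemma mem_TT {s : ℕ} {p : Finset (Fin k) × List (Fin k)} :
    p ∈ TT k s ↔ p.2.Pairwise (· ≥ ·) ∧ p.1.card + p.2.length = s := by
  rw [TT, Finset.mem_biUnion]
  constructor
  · rintro ⟨r, hr, hp⟩
    rcases le_or_gt r s with hrs | hrs
    · rw [if_pos hrs, Finset.mem_product, Finset.mem_powersetCard_univ] at hp
      obtain ⟨hc, hl⟩ := hp
      rw [mem_SL] at hl
      exact ⟨hl.1, by omega⟩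
    · rw [if_neg (not_le.mpr hrs)] at hp
      exact absurd hp (Finset.notMem_empty _)
  · rintro ⟨hsort, hlen⟩
    refine ⟨p.1.card, ?_, ?_⟩
    · rw [Finset.mem_range]
      have := Finset.card_le_univ p.1
      simp only [Finset.card_univ, Fintype.card_fin] at this
      omega
    · rw [if_pos (by omega), Finset.mem_product, Finset.mem_powersetCard_univ, mem_SL]
      exact ⟨rfl, hsort, by omega⟩

def mx (hk : 0 < k) (Cs : Finset (Fin k)) : Fin k :=
  if h : Cs.Nonempty then Cs.max' h else ⟨0, hk⟩

lemma mx_mem (hk : 0 < k) {Cs : Finset (Fin k)} (h : Cs.Nonempty) : mx k hk Cs ∈ Cs := by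
  rw [mx, dif_pos h]; exact Cs.max'_mem h

lemma le_mx (hk : 0 < k) {Cs : Finset (Fin k)} (h : Cs.Nonempty) {c : Fin k} (hc : c ∈ Cs) :
    c ≤ mx k hk Cs := by
  rw [mx, dif_pos h]; exact Cs.le_max' c hc

lemma mx_insert (hk : 0 < k) {Cs : Finset (Fin k)} {a : Fin k} (ha : ∀ c ∈ Cs, c < a) :
    mx k hk (insert a Cs) = a := by
  have hne : (insert a Cs).Nonempty := ⟨a, Finset.mem_insert_self a Cs⟩
  apply le_antisymm
  · rw [mx, dif_pos hne]
    apply Finset.max'_le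
    intro c hc
    rcases Finset.mem_insert.mp hc with rfl | hc
    · exact le_refl _
    · exact (ha c hc).le
  · exact le_mx k hk hne (Finset.mem_insert_self a Cs)

def mov (hk : 0 < k) : Finset (Fin k) × List (Fin k) → Finset (Fin k) × List (Fin k)
  | (Cs, []) => (Cs.erase (mx k hk Cs), [mx k hk Cs])
  | (Cs, a :: t) =>
    if ∀ c ∈ Cs, c < a then (insert a Cs, t)
    else (Cs.erase (mx k hk Cs), mx k hk Cs :: a :: t)

def wt (s : ℤ) (p : Finset (Fin k) × List (Fin k)) : PolyRing n k :=
  (-1 : PolyRing n k) ^ (p.1.card) * ew n k hn s p.1 * hw n k hn p.2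

lemma csnonempty {s : ℕ} (hs : 1 ≤ s) {Cs : Finset (Fin k)} {a : Fin k} {l : List (Fin k)}
    (hp : (Cs, l) ∈ TT k s) (hcase : l = [] ∨ (l.head? = some a ∧ ¬ ∀ c ∈ Cs, c < a)) :
    Cs.Nonempty := by
  rw [mem_TT] at hp
  rcases hcase with rfl | ⟨_, hlt⟩
  · rw [← Finset.card_pos]
    simp only [List.length_nil] at hp
    omega
  · push_neg at hlt
    obtain ⟨c, hc, _⟩ := hlt
    exact ⟨c, hc⟩

lemma mov_mem (hk : 0 < k) {s : ℕ} (hs : 1 ≤ s) {p : Finset (Fin k) × List (Fin k)}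
    (hp : p ∈ TT k s) : mov k hk p ∈ TT k s := by
  obtain ⟨Cs, l⟩ := p
  have hp' := hp
  rw [mem_TT] at hp'
  obtain ⟨hsort, hlen⟩ := hp'
  rcases l with _ | ⟨a, t⟩
  · have hne : Cs.Nonempty := csnonempty k hs (a := ⟨0, hk⟩) hp (Or.inl rfl)
    rw [mov, mem_TT]
    constructor
    · simp [List.pairwise_cons]
    · simp only [List.length_cons, List.length_nil]
      rw [Finset.card_erase_of_mem (mx_mem k hk hne)]
      simp only [List.length_nil] at hlen
      omega
  · by_cases hlt : ∀ c ∈ Cs, c < a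
    · rw [mov, if_pos hlt, mem_TT]
      refine ⟨hsort.of_cons, ?_⟩
      rw [Finset.card_insert_of_notMem (fun h => lt_irrefl a (hlt a h))]
      simp only [List.length_cons] at hlen ⊢
      omega
    · have hne : Cs.Nonempty := csnonempty k hs hp (Or.inr ⟨rfl, hlt⟩)
      rw [mov, if_neg hlt, mem_TT]
      constructor
      · rw [List.pairwise_cons]
        refine ⟨?_, hsort⟩
        push_neg at hlt
        obtain ⟨c₀, hc₀, hac₀⟩ := hlt
        have haM : a ≤ mx k hk Cs := le_trans hac₀ (le_mx k hk hne hc₀)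
        intro b hb
        rcases List.mem_cons.mp hb with rfl | hb
        · exact haM
        · exact le_trans (List.rel_of_pairwise_cons hsort hb) haM
      · simp only [List.length_cons] at hlen ⊢
        rw [Finset.card_erase_of_mem (mx_mem k hk hne)]
        have : 1 ≤ Cs.card := Finset.card_pos.mpr hne
        omega

lemma mov_mov (hk : 0 < k) {s : ℕ} (hs : 1 ≤ s) {p : Finset (Fin k) × List (Fin k)}
    (hp : p ∈ TT k s) : mov k hk (mov k hk p) = p := by
  obtain ⟨Cs, l⟩ := p
  have hp' := hp
  rw [mem_TT] at hp'
  obtain ⟨hsort, hlen⟩ := hp'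
  have herase : ∀ (hne : Cs.Nonempty) (l' : List (Fin k)),
      mov k hk (Cs.erase (mx k hk Cs), mx k hk Cs :: l') = (Cs, l') := by
    intro hne l'
    rw [mov, if_pos]
    · rw [Finset.insert_erase (mx_mem k hk hne)]
    · intro c hc
      exact lt_of_le_of_ne (le_mx k hk hne (Finset.mem_of_mem_erase hc))
        (Finset.ne_of_mem_erase hc)
  rcases l with _ | ⟨a, t⟩
  · have hne : Cs.Nonempty := csnonempty k hs (a := ⟨0, hk⟩) hp (Or.inl rfl)
    rw [mov]
    exact herase hne []
  · by_cases hlt : ∀ c ∈ Cs, c < a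
    · rw [mov, if_pos hlt]
      have hmx : mx k hk (insert a Cs) = a := mx_insert k hk hlt
      have hnotmem : a ∉ Cs := fun h => lt_irrefl a (hlt a h)
      rcases t with _ | ⟨b, t'⟩
      · rw [mov, hmx, Finset.erase_insert hnotmem]
      · rw [mov, if_neg, hmx, Finset.erase_insert hnotmem]
        intro hall
        have hba : b ≤ a := List.rel_of_pairwise_cons hsort (List.mem_cons_self ..)
        exact absurd (hall a (Finset.mem_insert_self a Cs)) (not_lt.mpr hba)
    · have hne : Cs.Nonempty := csnonempty k hs hp (Or.inr ⟨rfl, hlt⟩)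
      rw [mov, if_neg hlt]
      exact herase hne (a :: t)

lemma wt_mov (hk : 0 < k) {s : ℕ} (hs : 1 ≤ s) {p : Finset (Fin k) × List (Fin k)}
    (hp : p ∈ TT k s) : wt n k hn (s : ℤ) p + wt n k hn (s : ℤ) (mov k hk p) = 0 := by
  obtain ⟨Cs, l⟩ := p
  have hp' := hp
  rw [mem_TT] at hp'
  obtain ⟨hsort, hlen⟩ := hp'
  simp only [List.length_cons] at hlen
  have key : Cs.Nonempty →
      wt n k hn (s : ℤ) (Cs, l) +
        wt n k hn (s : ℤ) (Cs.erase (mx k hk Cs), mx k hk Cs :: l) = 0 := by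
    intro hne
    set M := mx k hk Cs with hM
    have hE : ∀ c ∈ Cs.erase M, c < M := fun c hc =>
      lt_of_le_of_ne (le_mx k hk hne (Finset.mem_of_mem_erase hc)) (Finset.ne_of_mem_erase hc)
    have hins : insert M (Cs.erase M) = Cs := Finset.insert_erase (mx_mem k hk hne)
    have hcard : 1 ≤ Cs.card := Finset.card_pos.mpr hne
    have hcardE : (Cs.erase M).card = Cs.card - 1 := Finset.card_erase_of_mem (mx_mem k hk hne)
    have hew : ew n k hn (s : ℤ) Cs =
        (MvPolynomial.X M -
          MvPolynomial.C (tvar n hn ((M : ℤ) + 1 - (((Cs.erase M).card : ℤ) + 1) + s))) *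
          ew n k hn (s : ℤ) (Cs.erase M) := by
      conv_lhs => rw [← hins]
      exact ew_insert n k hn (s : ℤ) (Cs.erase M) M hE
    have harg : ((M : ℤ) + 1 + (l.length : ℕ)) =
        ((M : ℤ) + 1 - (((Cs.erase M).card : ℤ) + 1) + s) := by
      rw [hcardE]
      omega
    have hfact : hft n k hn M l.length =
        MvPolynomial.X M -
          MvPolynomial.C (tvar n hn ((M : ℤ) + 1 - (((Cs.erase M).card : ℤ) + 1) + s)) := by
      rw [hft, harg]
    have hsign : (-1 : PolyRing n k) ^ Cs.card = -(-1 : PolyRing n k) ^ (Cs.erase M).card := by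
      rw [hcardE]
      conv_lhs => rw [show Cs.card = (Cs.card - 1) + 1 by omega, pow_succ]
      ring
    simp only [wt]
    rw [hw_cons, hfact, hew, hsign]
    ring
  rcases l with _ | ⟨a, t⟩
  · rw [mov]
    exact key (csnonempty k hs (a := ⟨0, hk⟩) hp (Or.inl rfl))
  · by_cases hlt : ∀ c ∈ Cs, c < a
    · rw [mov, if_pos hlt]
      simp only [wt]
      have hnotmem : a ∉ Cs := fun h => lt_irrefl a (hlt a h)
      rw [Finset.card_insert_of_notMem hnotmem, ew_insert n k hn (s : ℤ) Cs a hlt, hw_cons]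
      simp only [List.length_cons] at hlen
      have harg : ((a : ℤ) + 1 + (t.length : ℕ)) =
          ((a : ℤ) + 1 - ((Cs.card : ℤ) + 1) + s) := by omega
      have hfact : hft n k hn a t.length =
          MvPolynomial.X a -
            MvPolynomial.C (tvar n hn ((a : ℤ) + 1 - ((Cs.card : ℤ) + 1) + s)) := by
        rw [hft, harg]
      rw [hfact, pow_succ]
      ring
    · rw [mov, if_neg hlt]
      exact key (csnonempty k hs hp (Or.inr ⟨rfl, hlt⟩))

lemma mov_ne (hk : 0 < k) {p : Finset (Fin k) × List (Fin k)} : mov k hk p ≠ p := by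
  have : (mov k hk p).2.length ≠ p.2.length := by
    obtain ⟨Cs, l⟩ := p
    rcases l with _ | ⟨a, t⟩
    · simp [mov]
    · by_cases hlt : ∀ c ∈ Cs, c < a
      · rw [mov, if_pos hlt]
        simp
      · rw [mov, if_neg hlt]
        simp
  exact fun h => this (by rw [h])

lemma TT_sum_zero (hk : 0 < k) {s : ℕ} (hs : 1 ≤ s) :
    ∑ p ∈ TT k s, wt n k hn (s : ℤ) p = 0 :=
  Finset.sum_involution (fun p _ => mov k hk p)
    (fun p hp => wt_mov n k hn hk hs hp)
    (fun p _ _ => mov_ne k hk)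
    (fun p hp => mov_mem k hk hs hp)
    (fun p hp => mov_mov k hk hs hp)

lemma TT_sum_eq (s : ℕ) :
    ∑ p ∈ TT k s, wt n k hn (s : ℤ) p =
      ∑ r ∈ Finset.range (k+1),
        (-1 : PolyRing n k) ^ r * efax n k hn (s : ℤ) r * hzfac n k hn ((s : ℤ) - r) 0 := by
  rw [TT, Finset.sum_biUnion]
  · apply Finset.sum_congr rfl
    intro r _
    rcases le_or_gt r s with hrs | hrs
    · rw [if_pos hrs, Finset.sum_product, hzfac, if_pos (by omega : (0:ℤ) ≤ (s:ℤ) - r),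
        (by omega : ((s:ℤ) - r).toNat = s - r), hfac_eq_SL, efax, mul_assoc,
        Finset.sum_mul_sum, Finset.mul_sum]
      apply Finset.sum_congr rfl
      intro Cs hCs
      rw [Finset.mul_sum]
      apply Finset.sum_congr rfl
      intro l _
      rw [wt]
      simp only
      rw [Finset.mem_powersetCard_univ] at hCs
      rw [hCs]
      ring
    · rw [if_neg (not_le.mpr hrs), hzfac, if_neg (by omega), mul_zero, Finset.sum_empty]
  · intro x hx y hy hxy
    apply Finset.disjoint_left.mpr
    intro p hpx hpy
    apply hxy
    have hcard : ∀ z : ℕ, p ∈ (if z ≤ s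
        then (Finset.powersetCard z (Finset.univ : Finset (Fin k))) ×ˢ SL k (s - z)
        else ∅) → p.1.card = z := by
      intro z hz
      rcases le_or_gt z s with h | h
      · rw [if_pos h, Finset.mem_product, Finset.mem_powersetCard_univ] at hz
        exact hz.1
      · rw [if_neg (not_le.mpr h)] at hz
        exact absurd hz (Finset.notMem_empty _)
    rw [← hcard x hpx, ← hcard y hpy]

lemma main_identity (s : ℕ) (hs : 1 ≤ s) :
    ∑ r ∈ Finset.range (k+1),
      (-1 : PolyRing n k) ^ r * efax n k hn (s : ℤ) r * hzfac n k hn ((s : ℤ) - r) 0 = 0 := by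
  rcases Nat.eq_zero_or_pos k with rfl | hk
  · rw [Finset.sum_range_one, efax_zero, hzfac, if_pos (by omega : (0:ℤ) ≤ (s:ℤ) - (0:ℕ))]
    haveI : IsEmpty (Fin ((s : ℤ) - (0:ℕ)).toNat → Fin 0) :=
      ⟨fun f => (f ⟨0, by omega⟩).elim0⟩
    rw [hfac, Finset.univ_eq_empty, Finset.filter_empty, Finset.sum_empty]
    ring
  · rw [← TT_sum_eq]
    exact TT_sum_zero n k hn hk hs

lemma hfac_zero (s : ℤ) : hfac n k hn 0 s = 1 := by
  rw [hfac]
  rw [Finset.filter_true_of_mem (fun f _ => fun a b _ => a.elim0)]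
  simp

lemma hz_natCast (a : ℕ) : hzfac n k hn (a : ℤ) 0 = hfac n k hn a 0 := by
  rw [hzfac, if_pos (by omega : (0:ℤ) ≤ (a:ℤ))]
  simp

lemma hz_neg {z : ℤ} (h : z < 0) : hzfac n k hn z 0 = 0 := if_neg (not_le.mpr h)

lemma hgen_mem (n k : ℕ) (hn : 0 < n) {m : ℕ} (h1 : n - k + 1 ≤ m) (h2 : m ≤ n - 1) :
    hfac n k hn m 0 ∈ Jideal n k hn :=
  Ideal.subset_span (Or.inl ⟨m, ⟨h1, h2⟩, rfl⟩)

lemma step (n k : ℕ) (hn : 0 < n) (hkn : k ≤ n) : ∀ m : ℕ, n ≤ m →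
    Ideal.Quotient.mk (Jideal n k hn) (hfac n k hn m 0) =
      (-1) ^ (k+1) * Ideal.Quotient.mk (Jideal n k hn) (MvPolynomial.C (qvar n)) *
        Ideal.Quotient.mk (Jideal n k hn) (hfac n k hn (m - n) 0) := by
  set Q := Ideal.Quotient.mk (Jideal n k hn) with hQ
  have QI : ∀ s : ℕ, 1 ≤ s →
      ∑ r ∈ Finset.range (k+1),
        (-1 : PolyRing n k ⧸ Jideal n k hn) ^ r * Q (efax n k hn (s : ℤ) r) *
          Q (hzfac n k hn ((s : ℤ) - r) 0) = 0 := by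
    intro s hs
    have h := congrArg Q (main_identity n k hn s hs)
    rw [map_sum, map_zero] at h
    simp only [map_mul, map_pow, map_neg, map_one] at h
    exact h
  intro m
  induction m using Nat.strong_induction_on with
  | _ m ih =>
  intro hm
  rcases Nat.eq_or_lt_of_le hm with heq | hlt
  · -- base case m = n
    subst heq
    rw [Nat.sub_self, hfac_zero, map_one]
    have h0 : Q (hfac n k hn n 0 + (-1 : PolyRing n k) ^ k * MvPolynomial.C (qvar n)) = 0 :=
      Ideal.Quotient.eq_zero_iff_mem.mpr (Ideal.subset_span (Or.inr rfl))
    rw [map_add, map_mul, map_pow, map_neg, map_one] at h0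
    linear_combination h0
  · -- inductive case m > n
    have hm1 : 1 ≤ m := by omega
    have hmn1 : 1 ≤ m - n := by omega
    have h1 := QI m hm1
    have h2 := QI (m - n) hmn1
    have hshift : ∀ r : ℕ, efax n k hn (m : ℤ) r = efax n k hn ((m - n : ℕ) : ℤ) r := by
      intro r
      have hc : ((m : ℕ) : ℤ) = ((m - n : ℕ) : ℤ) + n := by omega
      rw [hc, efax_shift]
    simp only [hshift] at h1
    have key : ∀ r ∈ Finset.range (k+1), r ≠ 0 →
        (-1 : PolyRing n k ⧸ Jideal n k hn) ^ r * Q (efax n k hn ((m - n : ℕ) : ℤ) r) *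
          (Q (hzfac n k hn ((m : ℤ) - r) 0) -
            (-1) ^ (k+1) * Q (MvPolynomial.C (qvar n)) *
              Q (hzfac n k hn (((m - n : ℕ) : ℤ) - r) 0)) = 0 := by
      intro r hr hr0
      rw [Finset.mem_range] at hr
      have hr1 : 1 ≤ r := by omega
      have hrk : r ≤ k := by omega
      rcases le_or_gt n (m - r) with hc | hc
      · have harg1 : (m : ℤ) - r = ((m - r : ℕ) : ℤ) := by omega
        have harg2 : ((m - n : ℕ) : ℤ) - r = ((m - r - n : ℕ) : ℤ) := by omega
        rw [harg1, harg2, hz_natCast, hz_natCast]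
        rw [ih (m - r) (by omega) hc]
        ring
      · have hz1 : (m : ℤ) - r = ((m - r : ℕ) : ℤ) := by omega
        rw [hz1, hz_natCast]
        have hmem : hfac n k hn (m - r) 0 ∈ Jideal n k hn :=
          hgen_mem n k hn (by omega) (by omega)
        rw [Ideal.Quotient.eq_zero_iff_mem.mpr hmem]
        rw [hz_neg n k hn (by omega : ((m - n : ℕ) : ℤ) - r < 0), map_zero]
        ring
    have hsum : ∑ r ∈ Finset.range (k+1),
        (-1 : PolyRing n k ⧸ Jideal n k hn) ^ r * Q (efax n k hn ((m - n : ℕ) : ℤ) r) *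
          (Q (hzfac n k hn ((m : ℤ) - r) 0) -
            (-1) ^ (k+1) * Q (MvPolynomial.C (qvar n)) *
              Q (hzfac n k hn (((m - n : ℕ) : ℤ) - r) 0)) = 0 := by
      have expand : ∀ r ∈ Finset.range (k+1),
          (-1 : PolyRing n k ⧸ Jideal n k hn) ^ r * Q (efax n k hn ((m - n : ℕ) : ℤ) r) *
            (Q (hzfac n k hn ((m : ℤ) - r) 0) -
              (-1) ^ (k+1) * Q (MvPolynomial.C (qvar n)) *
                Q (hzfac n k hn (((m - n : ℕ) : ℤ) - r) 0)) =
          (-1) ^ r * Q (efax n k hn ((m - n : ℕ) : ℤ) r) * Q (hzfac n k hn ((m : ℤ) - r) 0) -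
            (-1) ^ (k+1) * Q (MvPolynomial.C (qvar n)) *
              ((-1) ^ r * Q (efax n k hn ((m - n : ℕ) : ℤ) r) *
                Q (hzfac n k hn (((m - n : ℕ) : ℤ) - r) 0)) := by
        intro r _
        ring
      rw [Finset.sum_congr rfl expand, Finset.sum_sub_distrib, ← Finset.mul_sum, h1, h2]
      ring
    have hfin := Finset.sum_eq_single_of_mem 0 (Finset.mem_range.mpr (by omega)) key
    rw [hsum] at hfin
    simp only [Nat.cast_zero, sub_zero, pow_zero, one_mul, efax_zero, map_one] at hfin
    rw [hz_natCast, hz_natCast] at hfin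
    linear_combination -hfin

end QH

open QH

/-- In `R = ℤ[q,t][x]/J` with torus indices reduced mod `n`:
`h_{nd+j}(x|t) ≡ (-1)^{d(k-1)} q^d h_j(x|t) mod J` for all `d ≥ 1`, `0 ≤ j ≤ n-1`. -/
theorem hfac_high_degree_reduction (n k : ℕ) (hn : 0 < n) (hk : k ≤ n) :
    ∀ d : ℕ, 1 ≤ d → ∀ j : ℕ, j ≤ n - 1 →
      hfac n k hn (n * d + j) 0 -
        (-1 : PolyRing n k) ^ (d * (k - 1)) * (MvPolynomial.C (qvar n)) ^ d *
          hfac n k hn j 0 ∈ Jideal n k hn := by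
  intro d hd j hj
  rcases Nat.eq_zero_or_pos k with rfl | hk0
  · -- degenerate case k = 0
    have hz : ∀ m : ℕ, 1 ≤ m → hfac n 0 hn m 0 = 0 := by
      intro m hm
      haveI : IsEmpty (Fin m → Fin 0) := ⟨fun f => (f ⟨0, by omega⟩).elim0⟩
      rw [hfac, Finset.univ_eq_empty, Finset.filter_empty, Finset.sum_empty]
    have hnd : 1 ≤ n * d := Nat.mul_pos hn hd
    rw [hz (n * d + j) (by omega)]
    rcases Nat.eq_zero_or_pos j with rfl | hj1
    · have hq : MvPolynomial.C (qvar n) ∈ Jideal n 0 hn := by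
        have hgen : hfac n 0 hn n 0 + (-1 : PolyRing n 0) ^ 0 * MvPolynomial.C (qvar n) ∈
            Jideal n 0 hn := Ideal.subset_span (Or.inr rfl)
        rw [hz n hn] at hgen
        simpa using hgen
      have hqd : (MvPolynomial.C (qvar n) : PolyRing n 0) ^ d ∈ Jideal n 0 hn := by
        rw [show d = (d - 1) + 1 by omega, pow_succ]
        exact Ideal.mul_mem_left _ _ hq
      have he : (0 : PolyRing n 0) -
          (-1 : PolyRing n 0) ^ (d * (0 - 1)) * (MvPolynomial.C (qvar n)) ^ d *
            hfac n 0 hn 0 0 = -((MvPolynomial.C (qvar n) : PolyRing n 0) ^ d) := by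
        rw [hfac_zero]
        norm_num
      rw [he]
      exact neg_mem hqd
    · rw [hz j hj1]
      simpa using Ideal.zero_mem (Jideal n 0 hn)
  · -- main case k ≥ 1
    set Q := Ideal.Quotient.mk (Jideal n k hn) with hQ
    have main : ∀ d : ℕ, 1 ≤ d →
        Q (hfac n k hn (n * d + j) 0) =
          (-1) ^ ((k+1) * d) * Q (MvPolynomial.C (qvar n)) ^ d * Q (hfac n k hn j 0) := by
      intro d hd
      induction d with
      | zero => omega
      | succ d ihd =>
        rcases Nat.eq_zero_or_pos d with rfl | hd1
        · have hstep := step n k hn hk (n * 1 + j) (by omega)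
          rw [show n * 1 + j - n = j by omega] at hstep
          rw [hstep]
          ring
        · have hdist : n * (d + 1) = n * d + n := by ring
          have hstep := step n k hn hk (n * (d + 1) + j) (by omega)
          rw [show n * (d + 1) + j - n = n * d + j by omega] at hstep
          rw [hstep, ihd hd1]
          rw [show (k+1) * (d+1) = (k+1) * d + (k+1) by ring, pow_add]
          ring
    have hsign : ((-1 : PolyRing n k ⧸ Jideal n k hn)) ^ ((k+1) * d) =
        (-1) ^ (d * (k - 1)) := by
      obtain ⟨k', rfl⟩ : ∃ k', k = k' + 1 := ⟨k - 1, by omega⟩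
      have h2 : ((-1 : PolyRing n (k'+1) ⧸ Jideal n (k'+1) hn)) ^ (2 * d) = 1 := by
        rw [pow_mul]
        rw [show ((-1 : PolyRing n (k'+1) ⧸ Jideal n (k'+1) hn)) ^ 2 = 1 by ring]
        exact one_pow d
      rw [show (k' + 1 + 1) * d = d * ((k' + 1) - 1) + 2 * d by
        simp only [Nat.add_sub_cancel]; ring]
      rw [pow_add, h2]
      ring
    have hfin := main d hd
    rw [hsign] at hfin
    refine (Ideal.Quotient.eq).mp ?_
    rw [map_mul, map_mul, map_pow, map_pow, map_neg, map_one]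
    exact hfin
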